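/- arXiv:1005.3246 — 2 statements merged into one kernel-verified Lean document; each statement's English description precedes it below -/
import Mathlib

section
/- The one-point compactification of a product of two locally compact Hausdorff spaces X and Y is homeomorphic to the smash product X* ∧ Y* of their one-point compactifications (with the points at infinity as basepoints). -/
open OnePoint
/-- The "wedge collapse" relation on the product of the one-point compactifications
`X* × Y*`: two points are identified iff they are equal or both lie in the wedge
`X* × {∞} ∪ {∞} × Y*`. -/
def wedgeSetoid (X Y : Type*) [TopologicalSpace X] [TopologicalSpace Y] :
    Setoid (OnePoint X × OnePoint Y) where
  r a b := a = b ∨ ((a.1 = ∞ ∨ a.2 = ∞) ∧ (b.1 = ∞ ∨ b.2 = ∞))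
  iseqv := by
    constructor
    · intro a; exact Or.inl rfl
    · intro a b h; tauto
    · intro a b c hab hbc; rcases hab with rfl | h <;> rcases hbc with rfl | h' <;> tauto

/-- The smash product `X* ∧ Y*` of the one-point compactifications of `X` and `Y`,
with the points at infinity as basepoints: the quotient of `X* × Y*` by the wedge. -/
def OnePointSmash (X Y : Type*) [TopologicalSpace X] [TopologicalSpace Y] : Type _ :=
  Quotient (wedgeSetoid X Y)

instance (X Y : Type*) [TopologicalSpace X] [TopologicalSpace Y] :
    TopologicalSpace (OnePointSmash X Y) :=
  instTopologicalSpaceQuotient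

section Aux

open Set

variable {X Y : Type*} [TopologicalSpace X] [TopologicalSpace Y]

/-- The collapse map `X* × Y* → (X × Y)*`. -/
def opsAux : OnePoint X × OnePoint Y → OnePoint (X × Y) :=
  fun p => Option.elim p.1 ∞ (fun x => Option.elim p.2 ∞ (fun y => OnePoint.some (x, y)))

@[simp] lemma opsAux_some (x : X) (y : Y) :
    opsAux (OnePoint.some x, OnePoint.some y) = OnePoint.some (x, y) := rfl

@[simp] lemma opsAux_infty_left (b : OnePoint Y) : opsAux ((∞ : OnePoint X), b) = ∞ := rfl

@[simp] lemma opsAux_infty_right (a : OnePoint X) : opsAux (a, (∞ : OnePoint Y)) = ∞ := by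
  cases a <;> rfl

lemma opsAux_eq_infty_iff (p : OnePoint X × OnePoint Y) :
    opsAux p = ∞ ↔ p.1 = ∞ ∨ p.2 = ∞ := by
  obtain ⟨a, b⟩ := p
  cases a <;> cases b <;> simp [opsAux, OnePoint.infty, OnePoint.some, Option.elim] <;> tauto

lemma opsAux_preimage (s : Set (OnePoint (X × Y))) (h : ∞ ∉ s) :
    opsAux ⁻¹' s =
      Prod.map (OnePoint.some : X → OnePoint X) (OnePoint.some : Y → OnePoint Y) ''
        ((OnePoint.some : X × Y → OnePoint (X × Y)) ⁻¹' s) := by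
  ext ⟨a, b⟩
  constructor
  · intro hp
    cases a with
    | infty => exact absurd hp h
    | coe x =>
      cases b with
      | infty =>
        simp only [Set.mem_preimage, opsAux_infty_right] at hp
        exact absurd hp h
      | coe y => exact ⟨(x, y), hp, rfl⟩
  · rintro ⟨⟨x, y⟩, hxy, heq⟩
    have h1 : (Prod.map (OnePoint.some : X → OnePoint X) (OnePoint.some : Y → OnePoint Y)
        (x, y)) = (OnePoint.some x, OnePoint.some y) := rfl
    rw [h1] at heq
    rw [← heq]
    simpa using hxy

lemma opsAux_preimage_compl (s : Set (OnePoint (X × Y))) (h : ∞ ∈ s) :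
    (opsAux ⁻¹' s)ᶜ =
      Prod.map (OnePoint.some : X → OnePoint X) (OnePoint.some : Y → OnePoint Y) ''
        ((OnePoint.some : X × Y → OnePoint (X × Y)) ⁻¹' s)ᶜ := by
  rw [← preimage_compl]
  rw [opsAux_preimage _ (by simp [h])]
  rw [preimage_compl]

lemma continuous_opsAux [LocallyCompactSpace X] [T2Space X] [LocallyCompactSpace Y] [T2Space Y] :
    Continuous (opsAux : OnePoint X × OnePoint Y → OnePoint (X × Y)) := by
  rw [continuous_def]
  intro s hs
  by_cases h : ∞ ∈ s
  · rw [← isClosed_compl_iff, opsAux_preimage_compl s h]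
    have hK : IsCompact ((OnePoint.some : X × Y → OnePoint (X × Y)) ⁻¹' s)ᶜ :=
      ((OnePoint.isOpen_iff_of_mem' h).mp hs).1
    exact (hK.image (by continuity)).isClosed
  · rw [opsAux_preimage s h]
    have hV : IsOpen ((OnePoint.some : X × Y → OnePoint (X × Y)) ⁻¹' s) :=
      ((OnePoint.isOpen_iff_of_notMem h).mp hs)
    exact ((OnePoint.isOpenEmbedding_coe.prodMap OnePoint.isOpenEmbedding_coe).isOpenMap) _ hV

lemma opsAux_respects (a b : OnePoint X × OnePoint Y) (h : (wedgeSetoid X Y).r a b) :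
    opsAux a = opsAux b := by
  rcases h with rfl | ⟨ha, hb⟩
  · rfl
  · rw [(opsAux_eq_infty_iff a).mpr ha, (opsAux_eq_infty_iff b).mpr hb]

instance : CompactSpace (OnePointSmash X Y) :=
  Quotient.compactSpace

/-- The induced map on the quotient. -/
def smashToOnePoint : OnePointSmash X Y → OnePoint (X × Y) :=
  Quotient.lift opsAux opsAux_respects

lemma continuous_smashToOnePoint [LocallyCompactSpace X] [T2Space X] [LocallyCompactSpace Y]
    [T2Space Y] : Continuous (smashToOnePoint : OnePointSmash X Y → OnePoint (X × Y)) :=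
  Continuous.quotient_lift continuous_opsAux _

lemma bijective_smashToOnePoint :
    Function.Bijective (smashToOnePoint : OnePointSmash X Y → OnePoint (X × Y)) := by
  constructor
  · rintro ⟨⟨a1, a2⟩⟩ ⟨⟨b1, b2⟩⟩ hab
    apply Quotient.sound
    have hab' : opsAux (a1, a2) = opsAux (b1, b2) := hab
    show (a1, a2) = (b1, b2) ∨ _
    cases a1 <;> cases a2 <;> cases b1 <;> cases b2 <;>
      simp_all [opsAux, OnePoint.infty, Option.elim, Prod.ext_iff] <;>
      first
        | exact Option.noConfusion hab'
        | exact Option.noConfusion hab'.symm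
        | tauto
        | exact absurd hab' (by simp [OnePoint.infty, OnePoint.some])
        | exact absurd hab'.symm (by simp [OnePoint.infty, OnePoint.some])
  · intro z
    cases z with
    | infty => exact ⟨Quotient.mk _ (∞, ∞), rfl⟩
    | coe p => exact ⟨Quotient.mk _ (OnePoint.some p.1, OnePoint.some p.2), rfl⟩

end Aux

/-- For locally compact Hausdorff spaces `X` and `Y`, the one-point
compactification `(X × Y)*` is homeomorphic to the smash product `X* ∧ Y*`, via a
homeomorphism sending the point at infinity to the basepoint and `(x, y)` to the
class of `(x, y)`. -/
theorem onePoint_prod_homeomorph_smash (X Y : Type*) [TopologicalSpace X] [TopologicalSpace Y]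
    [LocallyCompactSpace X] [T2Space X] [LocallyCompactSpace Y] [T2Space Y] :
    ∃ h : OnePoint (X × Y) ≃ₜ OnePointSmash X Y,
      h ∞ = Quotient.mk (wedgeSetoid X Y) (∞, ∞) ∧
      ∀ x : X, ∀ y : Y,
        h (OnePoint.some (x, y)) =
          Quotient.mk (wedgeSetoid X Y) (OnePoint.some x, OnePoint.some y) := by
  have hbij := bijective_smashToOnePoint (X := X) (Y := Y)
  let e : OnePointSmash X Y ≃ OnePoint (X × Y) := Equiv.ofBijective _ hbij
  have hcont : Continuous e := continuous_smashToOnePoint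
  let g : OnePointSmash X Y ≃ₜ OnePoint (X × Y) := hcont.homeoOfEquivCompactToT2
  refine ⟨g.symm, ?_, ?_⟩
  · have : g (Quotient.mk (wedgeSetoid X Y) (∞, ∞)) = ∞ := rfl
    rw [← this]; exact g.symm_apply_apply _
  · intro x y
    have : g (Quotient.mk (wedgeSetoid X Y) (OnePoint.some x, OnePoint.some y)) =
        OnePoint.some (x, y) := rfl
    rw [← this]; exact g.symm_apply_apply _
end

section
/- For a continuous family L : Λ → Φ_0(X, Y) of Fredholm operators of index 0 on Banach spaces, parametrized by a compact space Λ, there exists a finite-dimensional subspace V ⊆ Y such that Im L_λ + V = Y for all λ ∈ Λ, and then E_λ = L_λ^{-1}(V) defines a (finite-rank) vector bundle over Λ. -/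
set_option maxHeartbeats 1000000

open Set

variable {X Y : Type*} [NormedAddCommGroup X] [NormedSpace ℝ X] [CompleteSpace X]
  [NormedAddCommGroup Y] [NormedSpace ℝ Y] [CompleteSpace Y]

/-- A bounded operator between Banach spaces is Fredholm of index `0`: finite-dimensional
kernel, closed range, finite-dimensional cokernel, and `dim ker = dim coker`. -/
def IsFredholmIdxZero (T : X →L[ℝ] Y) : Prop :=
  FiniteDimensional ℝ (LinearMap.ker (T : X →ₗ[ℝ] Y)) ∧
  IsClosed (LinearMap.range (T : X →ₗ[ℝ] Y) : Set Y) ∧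
  FiniteDimensional ℝ (Y ⧸ LinearMap.range (T : X →ₗ[ℝ] Y)) ∧
  Module.finrank ℝ (LinearMap.ker (T : X →ₗ[ℝ] Y)) =
    Module.finrank ℝ (Y ⧸ LinearMap.range (T : X →ₗ[ℝ] Y))

section Aux

open Module ContinuousLinearMap

set_option synthInstance.maxHeartbeats 400000 in
lemma aux_finrank_comap (f : X →ₗ[ℝ] Y) (V : Submodule ℝ Y)
    [FiniteDimensional ℝ (LinearMap.ker f)] [FiniteDimensional ℝ V]
    [FiniteDimensional ℝ (Y ⧸ LinearMap.range f)]
    (hidx : finrank ℝ (LinearMap.ker f) = finrank ℝ (Y ⧸ LinearMap.range f))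
    (hsup : LinearMap.range f ⊔ V = ⊤) :
    FiniteDimensional ℝ (Submodule.comap f V) ∧
      finrank ℝ (Submodule.comap f V) = finrank ℝ V := by
  classical
  set K := LinearMap.ker f with hK
  set R := LinearMap.range f with hR
  set W := Submodule.comap f V with hW
  have hKW : K ≤ W := fun x hx => by
    simp only [hW, Submodule.mem_comap]
    have : f x = 0 := hx
    rw [this]; exact V.zero_mem
  -- the restricted map W → R ⊓ V
  have hmaps : ∀ x ∈ W, f x ∈ R ⊓ V := fun x hx =>
    ⟨LinearMap.mem_range_self f x, hx⟩
  set f' : W →ₗ[ℝ] (R ⊓ V : Submodule ℝ Y) := f.restrict hmaps with hf'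
  have hker : LinearMap.ker f' = Submodule.comap W.subtype K := by
    ext x
    simp only [LinearMap.mem_ker, Submodule.mem_comap, hK, LinearMap.mem_ker,
      Subtype.ext_iff, LinearMap.restrict_apply, Submodule.coe_subtype, hf']
    rfl
  have hsurj : Function.Surjective f' := by
    rintro ⟨y, hyR, hyV⟩
    obtain ⟨x, rfl⟩ := hyR
    exact ⟨⟨x, hyV⟩, rfl⟩
  haveI : FiniteDimensional ℝ (LinearMap.ker f') := by
    rw [hker]
    exact Module.Finite.equiv (Submodule.comapSubtypeEquivOfLe hKW).symm
  -- W is finite dimensional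
  obtain ⟨s, hs⟩ := f'.exists_rightInverse_of_surjective (LinearMap.range_eq_top.2 hsurj)
  haveI : FiniteDimensional ℝ W := by
    have hmem : ∀ x : W, x - s (f' x) ∈ LinearMap.ker f' := by
      intro x
      have : f' (s (f' x)) = f' x := LinearMap.congr_fun hs (f' x)
      simp [LinearMap.mem_ker, map_sub, this]
    set j : W →ₗ[ℝ] (LinearMap.ker f') × (R ⊓ V : Submodule ℝ Y) :=
      ((LinearMap.id - s.comp f').codRestrict (LinearMap.ker f')
        (by simpa using hmem)).prod f' with hj
    have hjinj : Function.Injective j := by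
      intro a b hab
      have h2 : f' a = f' b := congrArg Prod.snd hab
      have h1 : a - s (f' a) = b - s (f' b) := by
        have := congrArg Prod.fst hab
        simpa [hj, Subtype.ext_iff] using this
      rw [h2] at h1
      exact sub_left_injective h1
    exact FiniteDimensional.of_injective j hjinj
  constructor
  · infer_instance
  -- rank computation
  have e1 : finrank ℝ (LinearMap.ker f') = finrank ℝ K := by
    rw [hker]; exact (Submodule.comapSubtypeEquivOfLe hKW).finrank_eq
  have e2 : finrank ℝ (LinearMap.range f') = finrank ℝ (R ⊓ V : Submodule ℝ Y) := by
    rw [LinearMap.range_eq_top.2 hsurj]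
    exact finrank_top ℝ _
  have eW : finrank ℝ W = finrank ℝ (R ⊓ V : Submodule ℝ Y) + finrank ℝ K := by
    rw [← LinearMap.finrank_range_add_finrank_ker f', e1, e2]
  -- the other side
  have hVR : V ⊔ R = ⊤ := by rwa [sup_comm]
  set N : Submodule ℝ V := Submodule.comap V.subtype (V ⊓ R) with hN
  have eN : finrank ℝ N = finrank ℝ (R ⊓ V : Submodule ℝ Y) := by
    rw [inf_comm]
    exact (Submodule.comapSubtypeEquivOfLe inf_le_left).finrank_eq
  have equot : finrank ℝ (V ⧸ N) = finrank ℝ (Y ⧸ R) := by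
    have e3 := LinearMap.quotientInfEquivSupQuotient V R
    have hmap : (Submodule.comap (V ⊔ R).subtype R).map ((LinearEquiv.ofTop _ hVR : (V ⊔ R : Submodule ℝ Y) →ₗ[ℝ] Y)) = R := by
      ext y
      constructor
      · rintro ⟨x, hx, rfl⟩
        exact hx
      · intro hy
        exact ⟨⟨y, hVR ▸ Submodule.mem_top⟩, hy, rfl⟩
    have e4 := Submodule.Quotient.equiv (Submodule.comap (V ⊔ R).subtype R) R
      (LinearEquiv.ofTop _ hVR) hmap
    exact (e3.trans e4).finrank_eq
  have eV : finrank ℝ (Y ⧸ R) + finrank ℝ (R ⊓ V : Submodule ℝ Y) = finrank ℝ V := by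
    have := Submodule.finrank_quotient_add_finrank N
    rwa [equot, eN] at this
  rw [eW, ← eV, hidx, Nat.add_comm]


lemma aux_exists_local {Λ : Type*} [TopologicalSpace Λ]
    (L : Λ → X →L[ℝ] Y) (hL : Continuous L) (l₀ : Λ)
    [FiniteDimensional ℝ (LinearMap.ker ((L l₀) : X →ₗ[ℝ] Y))]
    [FiniteDimensional ℝ (Y ⧸ LinearMap.range ((L l₀) : X →ₗ[ℝ] Y))] :
    ∃ V₀ : Submodule ℝ Y, FiniteDimensional ℝ V₀ ∧ ∃ U : Set Λ, IsOpen U ∧ l₀ ∈ U ∧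
      ∀ l ∈ U, LinearMap.range ((L l) : X →ₗ[ℝ] Y) ⊔ V₀ = ⊤ := by
  classical
  set K₀ := LinearMap.ker ((L l₀) : X →ₗ[ℝ] Y) with hK₀
  obtain ⟨π, hπ⟩ := (Submodule.ClosedComplemented.of_finiteDimensional K₀)
  set X₀ : Submodule ℝ X := LinearMap.ker (π : X →ₗ[ℝ] K₀) with hX₀
  haveI : CompleteSpace X₀ := (ContinuousLinearMap.isClosed_ker π).completeSpace_coe
  set R₀ := LinearMap.range ((L l₀) : X →ₗ[ℝ] Y) with hR₀
  obtain ⟨s, hs⟩ := R₀.mkQ.exists_rightInverse_of_surjective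
    (LinearMap.range_eq_top.2 R₀.mkQ_surjective)
  set V₀ := LinearMap.range s with hV₀
  haveI : FiniteDimensional ℝ V₀ := inferInstance
  refine ⟨V₀, inferInstance, ?_⟩
  have hdisj : ∀ v ∈ V₀, v ∈ R₀ → v = 0 := by
    rintro v ⟨q, rfl⟩ hvR
    have hvR' : s q ∈ R₀ := hvR
    have h1 : R₀.mkQ (s q) = q := by
      have := LinearMap.congr_fun hs q
      simpa using this
    have h2 : R₀.mkQ (s q) = 0 := by
      rw [Submodule.mkQ_apply, Submodule.Quotient.mk_eq_zero]
      exact hvR'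
    rw [h2] at h1
    rw [← h1, map_zero]
  have hVsup : R₀ ⊔ V₀ = ⊤ := by
    rw [eq_top_iff]
    intro y _
    have h1 : R₀.mkQ (y - s (R₀.mkQ y)) = 0 := by
      have h := LinearMap.congr_fun hs (R₀.mkQ y)
      simp only [LinearMap.comp_apply, LinearMap.id_apply] at h
      rw [map_sub, h, sub_self]
    refine Submodule.mem_sup.2 ⟨y - s (R₀.mkQ y), ?_, s (R₀.mkQ y), ⟨_, rfl⟩, by abel⟩
    rw [Submodule.mkQ_apply, Submodule.Quotient.mk_eq_zero] at h1
    exact h1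
  -- the family of operators
  set c₁ : (X₀ × V₀) →L[ℝ] X := X₀.subtypeL.comp (fst ℝ X₀ V₀) with hc₁
  set c₂ : (X₀ × V₀) →L[ℝ] Y := V₀.subtypeL.comp (snd ℝ X₀ V₀) with hc₂
  set T : Λ → (X₀ × V₀) →L[ℝ] Y := fun l => (L l).comp c₁ + c₂ with hT
  have hTapp : ∀ l z, T l z = L l z.1 + (z.2 : Y) := fun l z => rfl
  have hTinj : LinearMap.ker ((T l₀) : (X₀ × V₀) →ₗ[ℝ] Y) = ⊥ := by
    rw [LinearMap.ker_eq_bot']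
    rintro ⟨x, v⟩ hz
    have hz' : L l₀ (x : X) + (v : Y) = 0 := hz
    have hvV : -(v : Y) ∈ V₀ := V₀.neg_mem v.2
    have hvR : -(v : Y) ∈ R₀ := ⟨(x : X), eq_neg_of_add_eq_zero_left hz'⟩
    have hv0 : -(v : Y) = 0 := hdisj _ hvV hvR
    have hv0' : (v : Y) = 0 := by simpa [neg_eq_zero] using hv0
    have hLx : L l₀ (x : X) = 0 := by rw [hv0'] at hz'; simpa using hz'
    have hxK : (x : X) ∈ K₀ := hLx
    have hx0 : (x : X) = 0 := by
      have h1 : π (x : X) = ⟨(x : X), hxK⟩ := hπ ⟨(x : X), hxK⟩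
      have h2 : π (x : X) = 0 := x.2
      rw [h2] at h1
      exact congrArg Subtype.val h1.symm
    refine Prod.ext (Subtype.ext hx0) (Subtype.ext hv0')
  have hTsurj : LinearMap.range ((T l₀) : (X₀ × V₀) →ₗ[ℝ] Y) = ⊤ := by
    rw [LinearMap.range_eq_top]
    intro y
    obtain ⟨r, hr, v, hv, rfl⟩ := Submodule.mem_sup.1 (hVsup ▸ Submodule.mem_top (x := y))
    obtain ⟨x, rfl⟩ := hr
    have hx' : x - ((π x : K₀) : X) ∈ X₀ := by
      have h2 : π ((π x : K₀) : X) = π x := hπ (π x)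
      show π (x - ((π x : K₀) : X)) = 0
      rw [map_sub, h2, sub_self]
    refine ⟨(⟨x - ((π x : K₀) : X), hx'⟩, ⟨v, hv⟩), ?_⟩
    have hKkill : L l₀ (((π x : K₀) : X)) = 0 := (π x).2
    have : T l₀ (⟨x - ((π x : K₀) : X), hx'⟩, ⟨v, hv⟩)
        = L l₀ (x - ((π x : K₀) : X)) + v := rfl
    rw [ContinuousLinearMap.coe_coe, this, map_sub, hKkill, sub_zero]
    simp
  set e : (X₀ × V₀) ≃L[ℝ] Y := ContinuousLinearEquiv.ofBijective (T l₀) hTinj hTsurj with he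
  set g : Λ → (X₀ × V₀) →L[ℝ] (X₀ × V₀) :=
    fun l => (e.symm : Y →L[ℝ] (X₀ × V₀)).comp (T l) with hg
  have hTcont : Continuous T := by
    have h1 : Continuous fun l => (L l).comp c₁ :=
      (((ContinuousLinearMap.compL ℝ (X₀ × V₀) X Y).flip c₁).continuous).comp hL
    exact h1.add continuous_const
  have hgcont : Continuous g :=
    ((ContinuousLinearMap.compL ℝ (X₀ × V₀) Y (X₀ × V₀))
      (e.symm : Y →L[ℝ] (X₀ × V₀))).continuous.comp hTcont
  set U : Set Λ := g ⁻¹' {f | IsUnit f} with hU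
  have hUopen : IsOpen U := (Units.isOpen (R := (X₀ × V₀) →L[ℝ] (X₀ × V₀))).preimage hgcont
  have hl₀U : l₀ ∈ U := by
    have : g l₀ = 1 := by
      refine ContinuousLinearMap.ext fun z => ?_
      have hz : T l₀ z = e z := rfl
      show e.symm (T l₀ z) = z
      rw [hz, ContinuousLinearEquiv.symm_apply_apply]
    show IsUnit (g l₀)
    rw [this]
    exact isUnit_one
  refine ⟨U, hUopen, hl₀U, ?_⟩
  intro l hl
  have hgsurj : Function.Surjective (g l) := by
    obtain ⟨u, hu⟩ := (hl : IsUnit (g l))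
    intro w
    refine ⟨(↑u⁻¹ : (X₀ × V₀) →L[ℝ] (X₀ × V₀)) w, ?_⟩
    have : g l ((↑u⁻¹ : (X₀ × V₀) →L[ℝ] (X₀ × V₀)) w)
        = ((g l) * (↑u⁻¹ : (X₀ × V₀) →L[ℝ] (X₀ × V₀))) w := rfl
    rw [this, ← hu, ← Units.val_mul, mul_inv_cancel, Units.val_one]
    rfl
  have hTlsurj : Function.Surjective (T l) := by
    intro y
    obtain ⟨z, hz⟩ := hgsurj (e.symm y)
    refine ⟨z, ?_⟩
    have : e.symm (T l z) = e.symm y := hz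
    exact e.symm.injective this
  rw [eq_top_iff]
  intro y _
  obtain ⟨z, hz⟩ := hTlsurj y
  exact Submodule.mem_sup.2 ⟨L l z.1, ⟨(z.1 : X), rfl⟩, (z.2 : Y), z.2.2, by rw [← hz]; rfl⟩


lemma aux_local_triv {Λ : Type*} [TopologicalSpace Λ]
    (L : Λ → X →L[ℝ] Y) (hL : Continuous L) (V : Submodule ℝ Y)
    [FiniteDimensional ℝ V] (l₀ : Λ)
    [FiniteDimensional ℝ (Submodule.comap ((L l₀) : X →ₗ[ℝ] Y) V)]
    (hsup : LinearMap.range ((L l₀) : X →ₗ[ℝ] Y) ⊔ V = ⊤) :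
    ∃ U ∈ nhds l₀, ∃ Φ : Λ → X →L[ℝ] X,
      ContinuousOn Φ U ∧
      ∀ l ∈ U, Set.BijOn (Φ l)
        ((Submodule.comap ((L l₀) : X →ₗ[ℝ] Y) V : Submodule ℝ X) : Set X)
        ((Submodule.comap ((L l) : X →ₗ[ℝ] Y) V : Submodule ℝ X) : Set X) := by
  classical
  set E₀ : Submodule ℝ X := Submodule.comap ((L l₀) : X →ₗ[ℝ] Y) V with hE₀
  obtain ⟨πE, hπE⟩ := Submodule.ClosedComplemented.of_finiteDimensional E₀
  obtain ⟨πV, hπV⟩ := Submodule.ClosedComplemented.of_finiteDimensional V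
  set Qm : Y →L[ℝ] Y := ContinuousLinearMap.id ℝ Y - V.subtypeL.comp πV with hQm
  have hQmapp : ∀ y, Qm y = y - ((πV y : V) : Y) := fun y => rfl
  have hQker : ∀ y, Qm y = 0 ↔ y ∈ V := by
    intro y
    constructor
    · intro h
      have h2 : y = ((πV y : V) : Y) := by
        have h3 := hQmapp y
        rw [h] at h3
        exact (sub_eq_zero.1 h3.symm)
      rw [h2]; exact (πV y).2
    · intro hy
      have h1 : πV y = ⟨y, hy⟩ := hπV ⟨y, hy⟩
      rw [hQmapp, h1, sub_self]
  set Y₀ : Submodule ℝ Y := LinearMap.ker (πV : Y →ₗ[ℝ] V) with hY₀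
  haveI : CompleteSpace Y₀ := (ContinuousLinearMap.isClosed_ker πV).completeSpace_coe
  have hQmem : ∀ y, Qm y ∈ Y₀ := by
    intro y
    have h1 : πV ((πV y : V) : Y) = πV y := hπV (πV y)
    show πV (Qm y) = 0
    rw [hQmapp, map_sub, h1, sub_self]
  set Q : Y →L[ℝ] Y₀ := Qm.codRestrict Y₀ hQmem with hQ
  set A : Λ → X →L[ℝ] Y₀ := fun l => Q.comp (L l) with hA
  have hAker : ∀ l x, A l x = 0 ↔ L l x ∈ V := by
    intro l x
    rw [← hQker (L l x)]
    constructor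
    · intro h; exact congrArg Subtype.val h
    · intro h; exact Subtype.ext h
  set X₀ : Submodule ℝ X := LinearMap.ker (πE : X →ₗ[ℝ] E₀) with hX₀
  haveI : CompleteSpace X₀ := (ContinuousLinearMap.isClosed_ker πE).completeSpace_coe
  set B : Λ → X₀ →L[ℝ] Y₀ := fun l => (A l).comp X₀.subtypeL with hB
  have hQV : ∀ v ∈ V, Q v = 0 := by
    intro v hv
    exact Subtype.ext ((hQker v).2 hv)
  have hBinj : LinearMap.ker ((B l₀) : X₀ →ₗ[ℝ] Y₀) = ⊥ := by
    rw [LinearMap.ker_eq_bot']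
    intro x hx
    have h1 : A l₀ (x : X) = 0 := hx
    have h2 : (x : X) ∈ E₀ := (hAker l₀ x).1 h1
    have h3 : πE (x : X) = ⟨(x : X), h2⟩ := hπE ⟨(x : X), h2⟩
    have h4 : πE (x : X) = 0 := x.2
    rw [h4] at h3
    have h5 : (x : X) = ((0 : E₀) : X) := congrArg Subtype.val h3.symm
    exact Subtype.ext (by simpa using h5)
  have hBsurj : LinearMap.range ((B l₀) : X₀ →ₗ[ℝ] Y₀) = ⊤ := by
    rw [LinearMap.range_eq_top]
    intro y₀
    obtain ⟨r, hr, v, hv, hy⟩ := Submodule.mem_sup.1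
      (hsup ▸ Submodule.mem_top (x := (y₀ : Y)))
    obtain ⟨x, rfl⟩ := hr
    have hx' : x - ((πE x : E₀) : X) ∈ X₀ := by
      have h2 : πE ((πE x : E₀) : X) = πE x := hπE (πE x)
      show πE (x - ((πE x : E₀) : X)) = 0
      rw [map_sub, h2, sub_self]
    refine ⟨⟨x - ((πE x : E₀) : X), hx'⟩, ?_⟩
    have hEV : L l₀ ((πE x : E₀) : X) ∈ V := (πE x).2
    have h5 : Q (L l₀ ((πE x : E₀) : X)) = 0 := hQV _ hEV
    have h6 : B l₀ ⟨x - ((πE x : E₀) : X), hx'⟩ = Q (L l₀ x) - Q (L l₀ ((πE x : E₀) : X)) := by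
      show Q (L l₀ (x - ((πE x : E₀) : X))) = _
      rw [map_sub, map_sub]
    have h7 : Q ((L l₀ x : Y)) = Q (y₀ : Y) - Q v := by
      have : (L l₀ x : Y) = (y₀ : Y) - v := by
        rw [← hy]; abel
      rw [this, map_sub]
    have h8 : Q (y₀ : Y) = y₀ := by
      refine Subtype.ext ?_
      show Qm (y₀ : Y) = (y₀ : Y)
      have h9 : πV ((y₀ : Y)) = 0 := y₀.2
      rw [hQmapp, h9]
      simp
    rw [ContinuousLinearMap.coe_coe, h6, h5, h7, hQV v hv, h8, sub_zero, sub_zero]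
  set e₀ : X₀ ≃L[ℝ] Y₀ := ContinuousLinearEquiv.ofBijective (B l₀) hBinj hBsurj with he₀
  set g : Λ → X₀ →L[ℝ] X₀ := fun l => (e₀.symm : Y₀ →L[ℝ] X₀).comp (B l) with hg
  have hBcont : Continuous B := by
    have h1 : Continuous A :=
      (((ContinuousLinearMap.compL ℝ X Y Y₀) Q).continuous).comp hL
    exact (((ContinuousLinearMap.compL ℝ X₀ X Y₀).flip X₀.subtypeL).continuous).comp h1
  have hgcont : Continuous g :=
    (((ContinuousLinearMap.compL ℝ X₀ Y₀ X₀) (e₀.symm : Y₀ →L[ℝ] X₀)).continuous).comp hBcont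
  set U : Set Λ := g ⁻¹' {f | IsUnit f} with hU
  have hUopen : IsOpen U := (Units.isOpen (R := X₀ →L[ℝ] X₀)).preimage hgcont
  have hl₀U : l₀ ∈ U := by
    have hgl₀ : g l₀ = 1 := by
      refine ContinuousLinearMap.ext fun z => ?_
      have hz : B l₀ z = e₀ z := rfl
      show e₀.symm (B l₀ z) = z
      rw [hz, ContinuousLinearEquiv.symm_apply_apply]
    show IsUnit (g l₀)
    rw [hgl₀]
    exact isUnit_one
  set h : Λ → X₀ →L[ℝ] X₀ := fun l => Ring.inverse (g l) with hh
  set c : Λ → X →L[ℝ] X₀ := fun l =>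
    (e₀.symm : Y₀ →L[ℝ] X₀).comp ((A l).comp (E₀.subtypeL.comp πE)) with hc
  have hccont : Continuous c := by
    have h1 : Continuous A :=
      (((ContinuousLinearMap.compL ℝ X Y Y₀) Q).continuous).comp hL
    have h2 : Continuous fun l => (A l).comp (E₀.subtypeL.comp πE) :=
      (((ContinuousLinearMap.compL ℝ X X Y₀).flip (E₀.subtypeL.comp πE)).continuous).comp h1
    exact (((ContinuousLinearMap.compL ℝ X Y₀ X₀) (e₀.symm : Y₀ →L[ℝ] X₀)).continuous).comp h2
  set Φ : Λ → X →L[ℝ] X := fun l =>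
    ContinuousLinearMap.id ℝ X - X₀.subtypeL.comp ((h l).comp (c l)) with hΦ
  have hΦapp : ∀ l x, Φ l x = x - ((h l (c l x) : X₀) : X) := fun l x => rfl
  have hcapp : ∀ l x, c l x = e₀.symm (A l ((πE x : E₀) : X)) := fun l x => rfl
  refine ⟨U, hUopen.mem_nhds hl₀U, Φ, ?_, ?_⟩
  · -- continuity
    have hhcont : ContinuousOn h U := by
      intro l hl
      have hu : IsUnit (g l) := hl
      have h1 : ContinuousAt Ring.inverse (g l) := by
        have := NormedRing.inverse_continuousAt (R := X₀ →L[ℝ] X₀) hu.unit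
        rwa [IsUnit.unit_spec] at this
      exact (h1.comp hgcont.continuousAt).continuousWithinAt
    have h2 : ContinuousOn (fun l => (h l).comp (c l)) U :=
      ContinuousOn.clm_comp hhcont hccont.continuousOn
    have h3 : ContinuousOn (fun l => X₀.subtypeL.comp ((h l).comp (c l))) U :=
      ContinuousOn.clm_comp continuousOn_const h2
    exact continuousOn_const.sub h3
  · intro l hl
    have hu : IsUnit (g l) := hl
    have hgh : ∀ w, g l (h l w) = w := by
      intro w
      have h1 : (g l) * (h l) = 1 := Ring.mul_inverse_cancel (g l) hu
      calc g l (h l w) = ((g l) * (h l)) w := rfl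
        _ = w := by rw [h1]; rfl
    have hhg : ∀ w, h l (g l w) = w := by
      intro w
      have h1 : (h l) * (g l) = 1 := Ring.inverse_mul_cancel (g l) hu
      calc h l (g l w) = ((h l) * (g l)) w := rfl
        _ = w := by rw [h1]; rfl
    -- key computation on E₀
    have hAw : ∀ (w : X₀), A l ((w : X₀) : X) = e₀ (g l w) := by
      intro w
      have h1 : g l w = e₀.symm (B l w) := rfl
      rw [h1, ContinuousLinearEquiv.apply_symm_apply]
      rfl
    have hkey : ∀ x (hx : x ∈ E₀), Φ l x = x - ((h l (e₀.symm (A l x)) : X₀) : X) := by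
      intro x hx
      have h1 : πE x = ⟨x, hx⟩ := hπE ⟨x, hx⟩
      rw [hΦapp, hcapp, h1]
    refine ⟨?_, ?_, ?_⟩
    · -- MapsTo
      intro x hx
      have hx' : x ∈ E₀ := hx
      show Φ l x ∈ Submodule.comap ((L l) : X →ₗ[ℝ] Y) V
      have h1 : A l (Φ l x) = 0 := by
        rw [hkey x hx']
        set w : X₀ := h l (e₀.symm (A l x)) with hw
        rw [map_sub]
        have h2 : A l ((w : X₀) : X) = e₀ (g l w) := hAw w
        have h3 : g l w = e₀.symm (A l x) := hgh _
        rw [h2, h3, ContinuousLinearEquiv.apply_symm_apply, sub_self]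
      exact (hAker l (Φ l x)).1 h1
    · -- InjOn
      intro x1 hx1 x2 hx2 heq
      have hπΦ : ∀ x (hx : x ∈ E₀), πE (Φ l x) = ⟨x, hx⟩ := by
        intro x hx
        rw [hkey x hx]
        set w : X₀ := h l (e₀.symm (A l x)) with hw
        have h1 : πE ((w : X₀) : X) = 0 := w.2
        rw [map_sub, h1, sub_zero, hπE ⟨x, hx⟩]
      have h2 := hπΦ x1 hx1
      rw [heq, hπΦ x2 hx2] at h2
      exact (congrArg Subtype.val h2).symm
    · -- SurjOn
      intro f hf
      have hf' : L l f ∈ V := hf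
      have hAf : A l f = 0 := (hAker l f).2 hf'
      set eh : E₀ := πE f with heh
      set e : X := (eh : X) with he
      have hx₀ : f - e ∈ X₀ := by
        have h1 : πE e = eh := hπE eh
        show πE (f - e) = 0
        rw [map_sub, h1, heh, sub_self]
      set xh : X₀ := ⟨f - e, hx₀⟩ with hxh
      have heE : e ∈ E₀ := eh.2
      refine ⟨e, heE, ?_⟩
      have h1 : A l e = -(B l xh) := by
        have h2 : A l f - A l (f - e) = A l e := by
          rw [← map_sub]; congr 1; abel
        have h3 : A l (f - e) = B l xh := rfl
        rw [← h2, hAf, h3, zero_sub]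
      have h4 : e₀.symm (A l e) = -(g l xh) := by
        rw [h1, map_neg]; rfl
      have h5 : h l (e₀.symm (A l e)) = -xh := by
        rw [h4, map_neg, hhg]
      rw [hkey e heE, h5]
      show e - (((-xh : X₀) : X)) = f
      have : ((-xh : X₀) : X) = -(f - e) := rfl
      rw [this]
      abel


end Aux

/-- For a continuous family `L : Λ → Φ₀(X, Y)` of index-`0` Fredholm
operators parametrized by a compact space `Λ`, there is a finite-dimensional subspace
`V ⊆ Y` with `Im L_λ + V = Y` for all `λ`; then `E_λ = L_λ⁻¹(V)` has
`dim E_λ = dim V` for all `λ` and defines a vector bundle over `Λ`: locally, the fibers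
`E_λ` are carried isomorphically onto the fixed fiber `E_{λ₀}` by a continuous family of
operators. -/
theorem index_bundle_exists
    (Λ : Type*) [TopologicalSpace Λ] [CompactSpace Λ]
    (L : Λ → X →L[ℝ] Y) (hL : Continuous L) (hFred : ∀ l, IsFredholmIdxZero (L l)) :
    ∃ V : Submodule ℝ Y, FiniteDimensional ℝ V ∧
      (∀ l : Λ, LinearMap.range ((L l) : X →ₗ[ℝ] Y) ⊔ V = ⊤) ∧
      (∀ l : Λ, Module.finrank ℝ (Submodule.comap ((L l) : X →ₗ[ℝ] Y) V) =
        Module.finrank ℝ V) ∧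
      ∀ l₀ : Λ, ∃ U ∈ nhds l₀, ∃ Φ : Λ → X →L[ℝ] X,
        ContinuousOn Φ U ∧
        ∀ l ∈ U, Set.BijOn (Φ l)
          ((Submodule.comap ((L l₀) : X →ₗ[ℝ] Y) V : Submodule ℝ X) : Set X)
          ((Submodule.comap ((L l) : X →ₗ[ℝ] Y) V : Submodule ℝ X) : Set X) := by
  classical
  have hloc : ∀ l₀ : Λ, ∃ V₀ : Submodule ℝ Y, FiniteDimensional ℝ V₀ ∧
      ∃ U : Set Λ, IsOpen U ∧ l₀ ∈ U ∧
        ∀ l ∈ U, LinearMap.range ((L l) : X →ₗ[ℝ] Y) ⊔ V₀ = ⊤ := by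
    intro l₀
    haveI := (hFred l₀).1
    haveI := (hFred l₀).2.2.1
    exact aux_exists_local L hL l₀
  choose V₀ hV₀fin U hUopen hmem hUsurj using hloc
  obtain ⟨t, ht⟩ := IsCompact.elim_finite_subcover isCompact_univ U hUopen
    (fun l _ => Set.mem_iUnion.2 ⟨l, hmem l⟩)
  set V : Submodule ℝ Y := t.sup V₀ with hV
  haveI : ∀ i, FiniteDimensional ℝ (V₀ i) := hV₀fin
  haveI hVfin : FiniteDimensional ℝ V := Submodule.finiteDimensional_finset_sup t V₀
  have hVsup : ∀ l, LinearMap.range ((L l) : X →ₗ[ℝ] Y) ⊔ V = ⊤ := by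
    intro l
    obtain ⟨i, hit, hil⟩ : ∃ i ∈ t, l ∈ U i := by
      have := ht (Set.mem_univ l)
      simpa using this
    have h1 := hUsurj i l hil
    have h2 : V₀ i ≤ V := Finset.le_sup hit
    have h3 : (⊤ : Submodule ℝ Y) ≤ LinearMap.range ((L l) : X →ₗ[ℝ] Y) ⊔ V := by
      rw [← h1]
      exact sup_le_sup_left h2 _
    exact top_unique h3
  have hdim : ∀ l, FiniteDimensional ℝ (Submodule.comap ((L l) : X →ₗ[ℝ] Y) V) ∧
      Module.finrank ℝ (Submodule.comap ((L l) : X →ₗ[ℝ] Y) V) = Module.finrank ℝ V := by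
    intro l
    haveI : FiniteDimensional ℝ (LinearMap.ker ((L l) : X →ₗ[ℝ] Y)) := (hFred l).1
    haveI : FiniteDimensional ℝ (Y ⧸ LinearMap.range ((L l) : X →ₗ[ℝ] Y)) := (hFred l).2.2.1
    exact aux_finrank_comap ((L l) : X →ₗ[ℝ] Y) V (hFred l).2.2.2 (hVsup l)
  refine ⟨V, hVfin, hVsup, fun l => (hdim l).2, ?_⟩
  intro l₀
  haveI := (hdim l₀).1
  exact aux_local_triv L hL V l₀ (hVsup l₀)
end
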